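/- Let 0 < p < q be coprime and Λ_{p,q} = qℤ × qℤ × ℤ + ℤ·((−p) mod q, 1, 0). The set of points of Λ_{p,q} contained in the dilated tetrahedron 2Δ′(p,q), where Δ′(p,q) = conv{(0,0,0),(q,0,0),(0,0,1),(0,q,1)}, consists of: the four vertices (0,0,0),(2q,0,0),(0,0,2),(0,2q,2); the six edge midpoints; and the q−1 points (i·p′ mod q, i, 1) for 1 ≤ i ≤ q−1, where p′ = (−p) mod q. In total 2Δ′(p,q) contains q+9 lattice points. -/

import Mathlib

private lemma hull_char10 (q : ℝ) (hq : 0 < q) (x : Fin 3 → ℝ) :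
    x ∈ convexHull ℝ ({![0,0,0], ![2*q,0,0], ![0,0,2], ![0,2*q,2]} : Set (Fin 3 → ℝ)) ↔
      0 ≤ x 0 ∧ 0 ≤ x 1 ∧ x 1 ≤ q * x 2 ∧ x 0 + q * x 2 ≤ 2*q := by
  constructor
  · intro hx
    have hconv : Convex ℝ {y : Fin 3 → ℝ | 0 ≤ y 0 ∧ 0 ≤ y 1 ∧ y 1 ≤ q * y 2 ∧ y 0 + q * y 2 ≤ 2*q} := by
      intro u hu v hv a b ha hb hab
      simp only [Set.mem_setOf_eq, Pi.add_apply, Pi.smul_apply, smul_eq_mul] at *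
      refine ⟨by nlinarith, by nlinarith, by nlinarith, by nlinarith⟩
    have hsub : ({![0,0,0], ![2*q,0,0], ![0,0,2], ![0,2*q,2]} : Set (Fin 3 → ℝ)) ⊆
        {y : Fin 3 → ℝ | 0 ≤ y 0 ∧ 0 ≤ y 1 ∧ y 1 ≤ q * y 2 ∧ y 0 + q * y 2 ≤ 2*q} := by
      rintro y hy
      simp only [Set.mem_insert_iff, Set.mem_singleton_iff] at hy
      rcases hy with rfl|rfl|rfl|rfl <;> refine ⟨?_,?_,?_,?_⟩ <;> norm_num [Matrix.cons_val_two, Matrix.tail_cons, Matrix.head_cons] <;> nlinarith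
    exact convexHull_min hsub hconv hx
  · rintro ⟨h0, h1, h2, h3⟩
    have h2q : (2*q) ≠ 0 := by positivity
    have hA : 0 ≤ 1 - x 0/(2*q) - x 2/2 := by
      have h : 1 - x 0/(2*q) - x 2/2 = (2*q - x 0 - q * x 2)/(2*q) := by field_simp
      rw [h]; exact div_nonneg (by linarith) (by positivity)
    have hC : 0 ≤ x 2/2 - x 1/(2*q) := by
      have h : x 2/2 - x 1/(2*q) = (q * x 2 - x 1)/(2*q) := by field_simp
      rw [h]; exact div_nonneg (by linarith) (by positivity)
    set w : Fin 4 → ℝ := ![1 - x 0/(2*q) - x 2/2, x 0/(2*q), x 2/2 - x 1/(2*q), x 1/(2*q)] with hw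
    set v : Fin 4 → (Fin 3 → ℝ) := ![![0,0,0], ![2*q,0,0], ![0,0,2], ![0,2*q,2]] with hv
    have hxeq : ∑ i, w i • v i = x := by
      funext j
      fin_cases j <;>
        · simp [hw, hv, Fin.sum_univ_four, Finset.sum_apply, Pi.smul_apply, smul_eq_mul,
            Matrix.vecHead, Matrix.vecTail]
          try field_simp
          try ring
    rw [← hxeq]
    apply (convex_convexHull ℝ _).sum_mem
    · intro i _
      fin_cases i
      · show 0 ≤ w 0; simpa [hw] using hA
      · show 0 ≤ w 1; simp only [hw, Matrix.cons_val_one, Matrix.head_cons]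
        exact div_nonneg h0 (by positivity)
      · show 0 ≤ w 2; simpa [hw, Matrix.vecHead, Matrix.vecTail] using hC
      · show 0 ≤ w 3; simp only [hw]
        rw [show (![1 - x 0/(2*q) - x 2/2, x 0/(2*q), x 2/2 - x 1/(2*q), x 1/(2*q)] : Fin 4 → ℝ) 3
          = x 1/(2*q) from by simp [Matrix.vecHead, Matrix.vecTail]]
        exact div_nonneg h1 (by positivity)
    · simp [hw, Fin.sum_univ_four, Matrix.vecHead, Matrix.vecTail]
      field_simp
      ring
    · intro i _
      apply subset_convexHull
      fin_cases i <;> simp [hv]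

private lemma veq3 {A B C A' B' C' : ℝ} (h1 : A = A') (h2 : B = B') (h3 : C = C') :
    ![A,B,C] = ![A',B',C'] := by rw [h1, h2, h3]

set_option maxHeartbeats 2000000 in
theorem lattice_points_of_two_dilated_right_angled
    (p q : ℤ) (hq : 1 < q) (hp : 0 < p) (hpq : p < q) (hco : IsCoprime p q) :
    ({x : Fin 3 → ℝ | (∃ a b c m : ℤ, x = ![(q : ℝ) * a + m * (((-p) % q) : ℤ), (q : ℝ) * b + m, (c : ℝ)]) ∧
        x ∈ convexHull ℝ
          ({![0,0,0], ![2*(q : ℝ),0,0], ![0,0,2], ![0,2*(q : ℝ),2]} : Set (Fin 3 → ℝ))} =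
      ({![0,0,0], ![2*(q : ℝ),0,0], ![0,0,2], ![0,2*(q : ℝ),2]} : Set (Fin 3 → ℝ)) ∪
      ({![(q : ℝ),0,0], ![0,0,1], ![0,(q : ℝ),1], ![(q : ℝ),0,1], ![(q : ℝ),(q : ℝ),1], ![0,(q : ℝ),2]} : Set (Fin 3 → ℝ)) ∪
      {x : Fin 3 → ℝ | ∃ i : ℤ, 1 ≤ i ∧ i ≤ q - 1 ∧
        x = ![(((i * ((-p) % q)) % q : ℤ) : ℝ), (i : ℝ), 1]}) ∧
    {x : Fin 3 → ℝ | (∃ a b c m : ℤ, x = ![(q : ℝ) * a + m * (((-p) % q) : ℤ), (q : ℝ) * b + m, (c : ℝ)]) ∧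
        x ∈ convexHull ℝ
          ({![0,0,0], ![2*(q : ℝ),0,0], ![0,0,2], ![0,2*(q : ℝ),2]} : Set (Fin 3 → ℝ))}.ncard
      = (q + 9).toNat := by
  have hq0 : (0:ℤ) < q := by linarith
  have hqR : (0:ℝ) < (q:ℝ) := by exact_mod_cast hq0
  have hq2R : (2:ℝ) ≤ (q:ℝ) := by exact_mod_cast (by omega : (2:ℤ) ≤ q)
  set p' : ℤ := (-p) % q with hp'def
  have hp'0 : 0 ≤ p' := Int.emod_nonneg _ (by omega)
  have hp'q : p' < q := Int.emod_lt_of_pos _ hq0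
  have hcop : IsCoprime p' q := by
    have h1 : IsCoprime (-p) q := hco.neg_left
    have h2 := h1.add_mul_left_left (-((-p)/q))
    have h3 : -p + q * -((-p)/q) = (-p) % q := by rw [Int.emod_def]; ring
    rwa [h3] at h2
  have hset : ({x : Fin 3 → ℝ | (∃ a b c m : ℤ, x = ![(q : ℝ) * a + m * (p' : ℤ), (q : ℝ) * b + m, (c : ℝ)]) ∧
        x ∈ convexHull ℝ
          ({![0,0,0], ![2*(q : ℝ),0,0], ![0,0,2], ![0,2*(q : ℝ),2]} : Set (Fin 3 → ℝ))} =
      ({![0,0,0], ![2*(q : ℝ),0,0], ![0,0,2], ![0,2*(q : ℝ),2]} : Set (Fin 3 → ℝ)) ∪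
      ({![(q : ℝ),0,0], ![0,0,1], ![0,(q : ℝ),1], ![(q : ℝ),0,1], ![(q : ℝ),(q : ℝ),1], ![0,(q : ℝ),2]} : Set (Fin 3 → ℝ)) ∪
      {x : Fin 3 → ℝ | ∃ i : ℤ, 1 ≤ i ∧ i ≤ q - 1 ∧
        x = ![(((i * p') % q : ℤ) : ℝ), (i : ℝ), 1]}) := by
    ext x
    simp only [Set.mem_union, Set.mem_insert_iff, Set.mem_singleton_iff, Set.mem_setOf_eq]
    constructor
    · rintro ⟨⟨a, b, c, m, rfl⟩, hx⟩
      rw [hull_char10 (q:ℝ) hqR] at hx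
      simp only [Matrix.cons_val_zero, Matrix.cons_val_one, Matrix.head_cons,
        Matrix.cons_val_two, Matrix.tail_cons] at hx
      obtain ⟨h0, h1, h2, h3⟩ := hx
      have H0 : (0:ℤ) ≤ q*a + m*p' := by exact_mod_cast h0
      have H1 : (0:ℤ) ≤ q*b + m := by exact_mod_cast h1
      have H2 : q*b + m ≤ q*c := by exact_mod_cast h2
      have H3 : q*a + m*p' + q*c ≤ 2*q := by exact_mod_cast h3
      have hc0 : 0 ≤ c := by
        by_contra hcc; push_neg at hcc; nlinarith
      have hc2 : c ≤ 2 := by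
        by_contra hcc; push_neg at hcc; nlinarith
      interval_cases c
      · -- c = 0
        have hm : m = -(q*b) := by linarith
        have hXq : q*a + m*p' = q*(a - b*p') := by linear_combination p' * hm
        have H0' : 0 ≤ q*(a - b*p') := hXq ▸ H0
        have H3' : q*(a - b*p') ≤ 2*q := by linarith [hXq]
        obtain ⟨s, hs⟩ : ∃ s : ℤ, a - b*p' = s := ⟨_, rfl⟩
        rw [hs] at H0' H3'
        have hs0 : 0 ≤ s := by by_contra hcc; push_neg at hcc; nlinarith
        have hs2 : s ≤ 2 := by by_contra hcc; push_neg at hcc; nlinarith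
        have E1 : ((q:ℝ)*b + m : ℝ) = 0 := by exact_mod_cast (by linarith : q*b + m = 0)
        have E2 : (((0:ℤ)):ℝ) = 0 := by norm_num
        interval_cases s
        · exact Or.inl (Or.inl (Or.inl (veq3
            (by exact_mod_cast (by rw [hXq, hs]; ring : q*a + m*p' = 0)) E1 E2)))
        · exact Or.inl (Or.inr (Or.inl (veq3
            (by exact_mod_cast (by rw [hXq, hs]; ring : q*a + m*p' = q)) E1 E2)))
        · exact Or.inl (Or.inl (Or.inr (Or.inl (veq3
            (by exact_mod_cast (by rw [hXq, hs]; ring : q*a + m*p' = 2*q)) E1 E2))))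
      · -- c = 1
        obtain ⟨y, hy⟩ : ∃ y : ℤ, q*b + m = y := ⟨_, rfl⟩
        have hXid : q*a + m*p' = q*(a - b*p') + y*p' := by linear_combination p' * hy
        obtain ⟨s, hs⟩ : ∃ s : ℤ, a - b*p' = s := ⟨_, rfl⟩
        rw [hs] at hXid
        have hy0 : 0 ≤ y := by linarith [hy]
        have hyq : y ≤ q := by linarith [hy]
        have H0' : 0 ≤ q*s + y*p' := hXid ▸ H0
        have H3' : q*s + y*p' ≤ q := by linarith [hXid]
        have E2 : (((1:ℤ)):ℝ) = 1 := by norm_num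
        rcases (by omega : y = 0 ∨ y = q ∨ (1 ≤ y ∧ y ≤ q - 1)) with rfl | hyq' | ⟨hy1, hy2⟩
        · -- y = 0
          have hs0 : 0 ≤ s := by by_contra hcc; push_neg at hcc; nlinarith
          have hs1 : s ≤ 1 := by by_contra hcc; push_neg at hcc; nlinarith
          have E1 : ((q:ℝ)*b + m : ℝ) = 0 := by exact_mod_cast hy
          interval_cases s
          · exact Or.inl (Or.inr (Or.inr (Or.inl (veq3
              (by exact_mod_cast (by rw [hXid]; ring : q*a + m*p' = 0)) E1 E2))))
          · exact Or.inl (Or.inr (Or.inr (Or.inr (Or.inr (Or.inl (veq3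
              (by exact_mod_cast (by rw [hXid]; ring : q*a + m*p' = q)) E1 E2))))))
        · -- y = q
          have hyp : y * p' = q * p' := by rw [hyq']
          have H0'' : 0 ≤ q*(s + p') := by nlinarith [H0']
          have H3'' : q*(s + p') ≤ q := by nlinarith [H3']
          have hu0 : 0 ≤ s + p' := by by_contra hcc; push_neg at hcc; nlinarith
          have hu1 : s + p' ≤ 1 := by by_contra hcc; push_neg at hcc; nlinarith
          have E1 : ((q:ℝ)*b + m : ℝ) = q := by
            exact_mod_cast (by rw [hy, hyq'] : q*b + m = q)
          rcases (by omega : s + p' = 0 ∨ s + p' = 1) with h | h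
          · exact Or.inl (Or.inr (Or.inr (Or.inr (Or.inl (veq3
              (by exact_mod_cast (by linear_combination hXid + p' * hyq' + q * h : q*a + m*p' = 0)) E1 E2)))))
          · exact Or.inl (Or.inr (Or.inr (Or.inr (Or.inr (Or.inr (Or.inl (veq3
              (by exact_mod_cast (by linear_combination hXid + p' * hyq' + q * h : q*a + m*p' = q)) E1 E2)))))))
        · -- 1 ≤ y ≤ q - 1
          obtain ⟨x0, hx0⟩ : ∃ x0 : ℤ, q*s + y*p' = x0 := ⟨_, rfl⟩
          rw [hx0] at H0' H3'
          have hx0mod : x0 % q = (y*p') % q := by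
            rw [← hx0, add_comm]
            exact Int.add_mul_emod_self_left (y*p') q s
          have hrne : (y*p') % q ≠ 0 := by
            intro hzz
            have hd : q ∣ y * p' := Int.dvd_of_emod_eq_zero hzz
            have hdy : q ∣ y := hcop.symm.dvd_of_dvd_mul_right hd
            have := Int.le_of_dvd (by omega) hdy
            omega
          have hx0lt : x0 < q := by
            rcases lt_or_eq_of_le H3' with h | h
            · exact h
            · exfalso; rw [h] at hx0mod; simp [Int.emod_self] at hx0mod
              exact hrne hx0mod.symm
          have hx0eq : x0 = (y*p') % q := by
            rw [← hx0mod]; exact (Int.emod_eq_of_lt H0' hx0lt).symm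
          refine Or.inr ⟨y, hy1, hy2, veq3 ?_ (by exact_mod_cast hy) E2⟩
          exact_mod_cast (by rw [hXid, hx0, hx0eq] : q*a + m*p' = ((y * p') % q : ℤ))
      · -- c = 2
        have hX0 : q*a + m*p' = 0 := le_antisymm (by linarith) H0
        have hdvd : q ∣ m := by
          refine hcop.symm.dvd_of_dvd_mul_right ⟨-a, ?_⟩
          linarith
        obtain ⟨k, rfl⟩ := hdvd
        have H1' : 0 ≤ q*(b + k) := by linarith
        have H2' : q*(b + k) ≤ 2*q := by linarith
        have hu0 : 0 ≤ b + k := by by_contra hcc; push_neg at hcc; nlinarith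
        have hu2 : b + k ≤ 2 := by by_contra hcc; push_neg at hcc; nlinarith
        have E0 : ((q:ℝ)*a + (↑(q*k)) * (p':ℤ) : ℝ) = 0 := by exact_mod_cast hX0
        have E2 : (((2:ℤ)):ℝ) = 2 := by norm_num
        rcases (by omega : b + k = 0 ∨ b + k = 1 ∨ b + k = 2) with h | h | h
        · refine Or.inl (Or.inl (Or.inr (Or.inr (Or.inl (veq3 E0 ?_ E2)))))
          exact_mod_cast (by linear_combination q * h : q*b + q*k = 0)
        · refine Or.inl (Or.inr (Or.inr (Or.inr (Or.inr (Or.inr (Or.inr (veq3 E0 ?_ E2)))))))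
          exact_mod_cast (by linear_combination q * h : q*b + q*k = q)
        · refine Or.inl (Or.inl (Or.inr (Or.inr (Or.inr (veq3 E0 ?_ E2)))))
          exact_mod_cast (by linear_combination q * h : q*b + q*k = 2*q)
    · intro hx
      have hullTac : ∀ A B Cc : ℝ, 0 ≤ A → 0 ≤ B → B ≤ (q:ℝ) * Cc → A + (q:ℝ) * Cc ≤ 2*(q:ℝ) →
          (![A,B,Cc] : Fin 3 → ℝ) ∈ convexHull ℝ
            ({![0,0,0], ![2*(q : ℝ),0,0], ![0,0,2], ![0,2*(q : ℝ),2]} : Set (Fin 3 → ℝ)) := by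
        intro A B Cc hA hB hBC hAC
        rw [hull_char10 (q:ℝ) hqR]
        norm_num
        exact ⟨hA, hB, hBC, hAC⟩
      rcases hx with ((rfl|rfl|rfl|rfl) | (rfl|rfl|rfl|rfl|rfl|rfl)) | ⟨i, hi1, hi2, rfl⟩ <;>
        refine ⟨?_, ?_⟩
      · exact ⟨0, 0, 0, 0, veq3 (by push_cast; ring) (by push_cast; ring) (by push_cast; ring)⟩
      · exact hullTac 0 0 0 le_rfl le_rfl (by linarith) (by linarith)
      · exact ⟨2, 0, 0, 0, veq3 (by push_cast; ring) (by push_cast; ring) (by push_cast; ring)⟩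
      · exact hullTac (2*(q:ℝ)) 0 0 (by linarith) le_rfl (by linarith) (by linarith)
      · exact ⟨0, 0, 2, 0, veq3 (by push_cast; ring) (by push_cast; ring) (by push_cast; ring)⟩
      · exact hullTac 0 0 2 le_rfl le_rfl (by linarith) (by linarith)
      · exact ⟨0, 2, 2, 0, veq3 (by push_cast; ring) (by push_cast; ring) (by push_cast; ring)⟩
      · exact hullTac 0 (2*(q:ℝ)) 2 le_rfl (by linarith) (by linarith) (by linarith)
      · exact ⟨1, 0, 0, 0, veq3 (by push_cast; ring) (by push_cast; ring) (by push_cast; ring)⟩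
      · exact hullTac (q:ℝ) 0 0 (by linarith) le_rfl (by linarith) (by linarith)
      · exact ⟨0, 0, 1, 0, veq3 (by push_cast; ring) (by push_cast; ring) (by push_cast; ring)⟩
      · exact hullTac 0 0 1 le_rfl le_rfl (by linarith) (by linarith)
      · exact ⟨0, 1, 1, 0, veq3 (by push_cast; ring) (by push_cast; ring) (by push_cast; ring)⟩
      · exact hullTac 0 (q:ℝ) 1 le_rfl (by linarith) (by linarith) (by linarith)
      · exact ⟨1, 0, 1, 0, veq3 (by push_cast; ring) (by push_cast; ring) (by push_cast; ring)⟩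
      · exact hullTac (q:ℝ) 0 1 (by linarith) le_rfl (by linarith) (by linarith)
      · exact ⟨1, 1, 1, 0, veq3 (by push_cast; ring) (by push_cast; ring) (by push_cast; ring)⟩
      · exact hullTac (q:ℝ) (q:ℝ) 1 (by linarith) (by linarith) (by linarith) (by linarith)
      · exact ⟨0, 1, 2, 0, veq3 (by push_cast; ring) (by push_cast; ring) (by push_cast; ring)⟩
      · exact hullTac 0 (q:ℝ) 2 le_rfl (by linarith) (by linarith) (by linarith)
      · -- family lattice witness
        refine ⟨-(i*p'/q), 0, 1, i, veq3 ?_ (by push_cast; ring) (by norm_num)⟩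
        have h : ((i * p') % q : ℤ) = q * (-(i*p'/q)) + i * p' := by
          rw [Int.emod_def]; ring
        exact_mod_cast h
      · have hr0 : (0:ℤ) ≤ (i * p') % q := Int.emod_nonneg _ (by omega)
        have hrq : (i * p') % q < q := Int.emod_lt_of_pos _ hq0
        have hr0R : (0:ℝ) ≤ (((i * p') % q : ℤ) : ℝ) := by exact_mod_cast hr0
        have hrqR : (((i * p') % q : ℤ) : ℝ) < q := by exact_mod_cast hrq
        have hi1R : (1:ℝ) ≤ (i:ℝ) := by exact_mod_cast hi1
        have hi2R : (i:ℝ) ≤ (q:ℝ) - 1 := by exact_mod_cast hi2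
        exact hullTac _ _ _ hr0R (by linarith) (by linarith) (by linarith)
  refine ⟨hset, ?_⟩
  rw [hset]
  -- Cardinality
  set C : Set (Fin 3 → ℝ) := {x : Fin 3 → ℝ | ∃ i : ℤ, 1 ≤ i ∧ i ≤ q - 1 ∧
      x = ![(((i * p') % q : ℤ) : ℝ), (i : ℝ), 1]} with hCdef
  have hCim : C = (fun i : ℤ => (![(((i * p') % q : ℤ) : ℝ), (i : ℝ), 1] : Fin 3 → ℝ)) '' (Set.Icc 1 (q-1)) := by
    ext x
    simp only [hCdef, Set.mem_setOf_eq, Set.mem_image, Set.mem_Icc]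
    constructor
    · rintro ⟨i, h1, h2, rfl⟩; exact ⟨i, ⟨h1, h2⟩, rfl⟩
    · rintro ⟨i, ⟨h1, h2⟩, rfl⟩; exact ⟨i, h1, h2, rfl⟩
  have hCfin : C.Finite := by
    rw [hCim]; exact (Set.finite_Icc _ _).image _
  have hCcard : C.ncard = (q-1).toNat := by
    rw [hCim, Set.ncard_image_of_injOn, ← Finset.coe_Icc, Set.ncard_coe_finset, Int.card_Icc]
    · omega
    · intro i _ j _ h
      have := congrFun h 1
      simp only [Matrix.cons_val_one, Matrix.head_cons, Matrix.cons_val_zero] at this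
      exact_mod_cast this
  have hnotC : ∀ (A B Cc : ℝ), (Cc ≠ 1 ∨ B = 0 ∨ B = (q:ℝ)) → (![A,B,Cc] : Fin 3 → ℝ) ∉ C := by
    intro A B Cc h hmem
    rw [hCdef] at hmem
    obtain ⟨i, hi1, hi2, hE⟩ := hmem
    have e1 := congrFun hE 1
    have e2 := congrFun hE 2
    simp only [Matrix.cons_val_one, Matrix.head_cons, Matrix.cons_val_two, Matrix.tail_cons, Matrix.cons_val_zero] at e1 e2
    have hi1R : (1:ℝ) ≤ (i:ℝ) := by exact_mod_cast hi1
    have hi2R : (i:ℝ) ≤ (q:ℝ) - 1 := by exact_mod_cast hi2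
    rcases h with h | h | h
    · exact h e2
    · rw [h] at e1; linarith
    · rw [h] at e1; linarith
  have vne0 : ∀ {A B Cc A' B' Cc' : ℝ}, A ≠ A' → (![A,B,Cc] : Fin 3 → ℝ) ≠ ![A',B',Cc'] :=
    fun h hE => h (by simpa using congrFun hE 0)
  have vne1 : ∀ {A B Cc A' B' Cc' : ℝ}, B ≠ B' → (![A,B,Cc] : Fin 3 → ℝ) ≠ ![A',B',Cc'] :=
    fun h hE => h (by simpa using congrFun hE 1)
  have vne2 : ∀ {A B Cc A' B' Cc' : ℝ}, Cc ≠ Cc' → (![A,B,Cc] : Fin 3 → ℝ) ≠ ![A',B',Cc'] :=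
    fun h hE => h (by simpa using congrFun hE 2)
  have n02q : (0:ℝ) ≠ 2*(q:ℝ) := ne_of_lt (by nlinarith)
  have n0q : (0:ℝ) ≠ (q:ℝ) := ne_of_lt hqR
  have nq2q : (q:ℝ) ≠ 2*(q:ℝ) := ne_of_lt (by nlinarith)
  have n01 : (0:ℝ) ≠ 1 := by norm_num
  have n02 : (0:ℝ) ≠ 2 := by norm_num
  have n12 : (1:ℝ) ≠ 2 := by norm_num
  have n21 : (2:ℝ) ≠ 1 := by norm_num
  have hsplit : (({![0,0,0], ![2*(q : ℝ),0,0], ![0,0,2], ![0,2*(q : ℝ),2]} : Set (Fin 3 → ℝ)) ∪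
      ({![(q : ℝ),0,0], ![0,0,1], ![0,(q : ℝ),1], ![(q : ℝ),0,1], ![(q : ℝ),(q : ℝ),1], ![0,(q : ℝ),2]} : Set (Fin 3 → ℝ)) ∪ C)
      = insert ![0,0,0] (insert ![2*(q:ℝ),0,0] (insert ![0,0,2] (insert ![0,2*(q:ℝ),2]
        (insert ![(q:ℝ),0,0] (insert ![0,0,1] (insert ![0,(q:ℝ),1] (insert ![(q:ℝ),0,1]
        (insert ![(q:ℝ),(q:ℝ),1] (insert ![0,(q:ℝ),2] C))))))))) := by
    simp only [Set.union_assoc, Set.insert_union, Set.singleton_union]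
  rw [hsplit]
  have h10 : (![0,(q:ℝ),2] : Fin 3 → ℝ) ∉ C := hnotC _ _ _ (Or.inl n21)
  have h9 : (![(q:ℝ),(q:ℝ),1] : Fin 3 → ℝ) ∉ insert ![0,(q:ℝ),2] C := by
    simp only [Set.mem_insert_iff]; push_neg
    exact ⟨vne0 n0q.symm, hnotC _ _ _ (Or.inr (Or.inr rfl))⟩
  have h8 : (![(q:ℝ),0,1] : Fin 3 → ℝ) ∉ insert ![(q:ℝ),(q:ℝ),1] (insert ![0,(q:ℝ),2] C) := by
    simp only [Set.mem_insert_iff]; push_neg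
    exact ⟨vne1 n0q, vne0 n0q.symm, hnotC _ _ _ (Or.inr (Or.inl rfl))⟩
  have h7 : (![0,(q:ℝ),1] : Fin 3 → ℝ) ∉ insert ![(q:ℝ),0,1] (insert ![(q:ℝ),(q:ℝ),1] (insert ![0,(q:ℝ),2] C)) := by
    simp only [Set.mem_insert_iff]; push_neg
    exact ⟨vne0 n0q, vne0 n0q, vne2 n12, hnotC _ _ _ (Or.inr (Or.inr rfl))⟩
  have h6 : (![0,0,1] : Fin 3 → ℝ) ∉ insert ![0,(q:ℝ),1] (insert ![(q:ℝ),0,1] (insert ![(q:ℝ),(q:ℝ),1] (insert ![0,(q:ℝ),2] C))) := by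
    simp only [Set.mem_insert_iff]; push_neg
    exact ⟨vne1 n0q, vne0 n0q, vne0 n0q, vne2 n12, hnotC _ _ _ (Or.inr (Or.inl rfl))⟩
  have h5 : (![(q:ℝ),0,0] : Fin 3 → ℝ) ∉ insert ![0,0,1] (insert ![0,(q:ℝ),1] (insert ![(q:ℝ),0,1] (insert ![(q:ℝ),(q:ℝ),1] (insert ![0,(q:ℝ),2] C)))) := by
    simp only [Set.mem_insert_iff]; push_neg
    exact ⟨vne0 n0q.symm, vne0 n0q.symm, vne2 n01, vne1 n0q, vne0 n0q.symm, hnotC _ _ _ (Or.inl n01)⟩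
  have h4 : (![0,2*(q:ℝ),2] : Fin 3 → ℝ) ∉ insert ![(q:ℝ),0,0] (insert ![0,0,1] (insert ![0,(q:ℝ),1] (insert ![(q:ℝ),0,1] (insert ![(q:ℝ),(q:ℝ),1] (insert ![0,(q:ℝ),2] C))))) := by
    simp only [Set.mem_insert_iff]; push_neg
    exact ⟨vne1 n02q.symm, vne1 n02q.symm, vne1 nq2q.symm, vne1 n02q.symm, vne1 nq2q.symm, vne1 nq2q.symm, hnotC _ _ _ (Or.inl n21)⟩
  have h3 : (![0,0,2] : Fin 3 → ℝ) ∉ insert ![0,2*(q:ℝ),2] (insert ![(q:ℝ),0,0] (insert ![0,0,1] (insert ![0,(q:ℝ),1] (insert ![(q:ℝ),0,1] (insert ![(q:ℝ),(q:ℝ),1] (insert ![0,(q:ℝ),2] C)))))) := by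
    simp only [Set.mem_insert_iff]; push_neg
    exact ⟨vne1 n02q, vne2 n02.symm, vne2 n21, vne2 n21, vne2 n21, vne2 n21, vne1 n0q, hnotC _ _ _ (Or.inl n21)⟩
  have h2 : (![2*(q:ℝ),0,0] : Fin 3 → ℝ) ∉ insert ![0,0,2] (insert ![0,2*(q:ℝ),2] (insert ![(q:ℝ),0,0] (insert ![0,0,1] (insert ![0,(q:ℝ),1] (insert ![(q:ℝ),0,1] (insert ![(q:ℝ),(q:ℝ),1] (insert ![0,(q:ℝ),2] C))))))) := by
    simp only [Set.mem_insert_iff]; push_neg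
    exact ⟨vne0 n02q.symm, vne0 n02q.symm, vne0 nq2q.symm, vne0 n02q.symm, vne0 n02q.symm, vne0 nq2q.symm, vne0 nq2q.symm, vne0 n02q.symm, hnotC _ _ _ (Or.inl n01)⟩
  have h1 : (![0,0,0] : Fin 3 → ℝ) ∉ insert ![2*(q:ℝ),0,0] (insert ![0,0,2] (insert ![0,2*(q:ℝ),2] (insert ![(q:ℝ),0,0] (insert ![0,0,1] (insert ![0,(q:ℝ),1] (insert ![(q:ℝ),0,1] (insert ![(q:ℝ),(q:ℝ),1] (insert ![0,(q:ℝ),2] C)))))))) := by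
    simp only [Set.mem_insert_iff]; push_neg
    exact ⟨vne0 n02q, vne2 n02, vne2 n02, vne0 n0q, vne2 n01, vne2 n01, vne2 n01, vne2 n01, vne2 n02, hnotC _ _ _ (Or.inl n01)⟩
  have f10 := hCfin
  have f9 := f10.insert (![0,(q:ℝ),2] : Fin 3 → ℝ)
  have f8 := f9.insert (![(q:ℝ),(q:ℝ),1] : Fin 3 → ℝ)
  have f7 := f8.insert (![(q:ℝ),0,1] : Fin 3 → ℝ)
  have f6 := f7.insert (![0,(q:ℝ),1] : Fin 3 → ℝ)
  have f5 := f6.insert (![0,0,1] : Fin 3 → ℝ)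
  have f4 := f5.insert (![(q:ℝ),0,0] : Fin 3 → ℝ)
  have f3 := f4.insert (![0,2*(q:ℝ),2] : Fin 3 → ℝ)
  have f2 := f3.insert (![0,0,2] : Fin 3 → ℝ)
  have f1 := f2.insert (![2*(q:ℝ),0,0] : Fin 3 → ℝ)
  rw [Set.ncard_insert_of_notMem h1 f1, Set.ncard_insert_of_notMem h2 f2,
    Set.ncard_insert_of_notMem h3 f3, Set.ncard_insert_of_notMem h4 f4,
    Set.ncard_insert_of_notMem h5 f5, Set.ncard_insert_of_notMem h6 f6,
    Set.ncard_insert_of_notMem h7 f7, Set.ncard_insert_of_notMem h8 f8,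
    Set.ncard_insert_of_notMem h9 f9, Set.ncard_insert_of_notMem h10 f10,
    hCcard]
  omega
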